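/- arXiv:2301.09206 — 8 statements merged into one kernel-verified Lean document; each statement's English description precedes it below -/
import Mathlib

section
/- Let q be a prime number and let 𝒜, ℬ ⊆ Z_q × Z_q be sets with |𝒜|·|ℬ| ≥ 16·q^{15/4}. Then for every nonzero λ ∈ Z_q there exist (a_1,a_2) ∈ 𝒜 and (b_1,b_2) ∈ ℬ with (a_1−b_1)(a_2−b_2) = λ in Z_q. -/
open Finset Complex
noncomputable def psi (q : ℕ) [Fact q.Prime] : AddChar (ZMod q) ℂ :=
  AddChar.FiniteField.primitiveChar_to_Complex (ZMod q)
lemma psi_prim (q : ℕ) [Fact q.Prime] : (psi q).IsPrimitive :=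
  AddChar.FiniteField.primitiveChar_to_Complex_isPrimitive (ZMod q)
variable {q : ℕ} [Fact q.Prime]
lemma ort (x : ZMod q) : ∑ t : ZMod q, psi q (t * x) = if x = 0 then (q : ℂ) else 0 := by
  have := AddChar.sum_mulShift x (psi_prim q)
  rw [ZMod.card] at this; rw [this]; split <;> simp
lemma psi_conj (x : ZMod q) : (starRingEnd ℂ) (psi q x) = psi q (-x) := by
  rw [AddChar.starComp_apply (by
    rw [ZMod.ringChar_zmod_n]; exact (Fact.out : q.Prime).pos), AddChar.inv_apply]

lemma parseval (C : Finset (ZMod q × ZMod q)) :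
    ∑ ξ : ZMod q × ZMod q, (∑ c ∈ C, psi q (ξ.1*c.1 + ξ.2*c.2)) *
      (starRingEnd ℂ) (∑ c ∈ C, psi q (ξ.1*c.1 + ξ.2*c.2)) = (q:ℂ)^2 * C.card := by
  have key : ∀ ξ : ZMod q × ZMod q, (∑ c ∈ C, psi q (ξ.1*c.1 + ξ.2*c.2)) *
      (starRingEnd ℂ) (∑ c ∈ C, psi q (ξ.1*c.1 + ξ.2*c.2)) =
      ∑ c ∈ C, ∑ c' ∈ C, psi q (ξ.1*(c.1-c'.1)) * psi q (ξ.2*(c.2-c'.2)) := by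
    intro ξ
    rw [map_sum, Finset.sum_mul_sum]
    refine Finset.sum_congr rfl fun c _ => Finset.sum_congr rfl fun c' _ => ?_
    rw [psi_conj, ← AddChar.map_add_eq_mul, ← AddChar.map_add_eq_mul]
    ring_nf
  simp_rw [key]
  rw [Finset.sum_comm]
  have swap2 : ∀ c : ZMod q × ZMod q, ∑ ξ : ZMod q × ZMod q, ∑ c' ∈ C,
      psi q (ξ.1*(c.1-c'.1)) * psi q (ξ.2*(c.2-c'.2)) =
      ∑ c' ∈ C, (if c.1 - c'.1 = 0 then (q:ℂ) else 0) * (if c.2 - c'.2 = 0 then (q:ℂ) else 0) := by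
    intro c
    rw [Finset.sum_comm]
    refine Finset.sum_congr rfl fun c' _ => ?_
    rw [Fintype.sum_prod_type, ← ort (c.1 - c'.1), ← ort (c.2 - c'.2), Finset.sum_mul_sum]
  simp_rw [swap2]
  have key2 : ∀ c c' : ZMod q × ZMod q,
      (if c.1 - c'.1 = 0 then (q:ℂ) else 0) * (if c.2 - c'.2 = 0 then (q:ℂ) else 0) =
      if c' = c then (q:ℂ)^2 else 0 := by
    intro c c'
    by_cases h1 : c.1 = c'.1 <;> by_cases h2 : c.2 = c'.2 <;>
      simp [sub_eq_zero, h1, h2, Prod.ext_iff, eq_comm, sq]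
  simp_rw [key2, Finset.sum_ite_eq' C]
  simp [mul_comm]

lemma star_id (t : ZMod q) (ht : t ≠ 0) (z1 z2 : ZMod q) :
    ∑ ξ : ZMod q × ZMod q, psi q (ξ.1*z1 + ξ.2*z2 - ξ.1*ξ.2*t⁻¹) =
      (q:ℂ) * psi q (t*z1*z2) := by
  rw [Fintype.sum_prod_type_right]
  have key : ∀ ξ2 ξ1 : ZMod q, psi q (ξ1*z1 + ξ2*z2 - ξ1*ξ2*t⁻¹) =
      psi q (ξ2*z2) * psi q (ξ1*(z1 - ξ2*t⁻¹)) := by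
    intro ξ2 ξ1
    rw [← AddChar.map_add_eq_mul]; ring_nf
  simp_rw [key, ← Finset.mul_sum, ort]
  have cond : ∀ ξ2 : ZMod q, (z1 - ξ2*t⁻¹ = 0) = (ξ2 = t*z1) := by
    intro ξ2
    rw [eq_iff_iff, sub_eq_zero]
    constructor
    · intro h; rw [h, mul_left_comm, mul_inv_cancel₀ ht, mul_one]
    · intro h; rw [h, mul_comm t z1, mul_inv_cancel_right₀ ht]
  simp_rw [cond, mul_ite, mul_zero, Finset.sum_ite_eq' Finset.univ]
  simp [mul_comm, mul_assoc, mul_left_comm]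

noncomputable def K2 (q : ℕ) [Fact q.Prime] (α β : ZMod q) : ℂ :=
  ∑ t ∈ Finset.univ.erase (0 : ZMod q), psi q (-(t*α) - t⁻¹*β)

noncomputable def S4 (q : ℕ) [Fact q.Prime] :
    Finset ((ZMod q × ZMod q) × (ZMod q × ZMod q)) :=
  (((Finset.univ.erase (0:ZMod q)) ×ˢ (Finset.univ.erase (0:ZMod q))) ×ˢ
    ((Finset.univ.erase (0:ZMod q)) ×ˢ (Finset.univ.erase (0:ZMod q)))).filter
    (fun p => p.1.1 + p.1.2 = p.2.1 + p.2.2 ∧ p.1.1⁻¹ + p.1.2⁻¹ = p.2.1⁻¹ + p.2.2⁻¹)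

lemma K2_conj (α β : ZMod q) : (starRingEnd ℂ) (K2 q α β) =
    ∑ t ∈ Finset.univ.erase (0 : ZMod q), psi q (t*α + t⁻¹*β) := by
  rw [K2, map_sum]
  refine Finset.sum_congr rfl fun t _ => ?_
  rw [psi_conj]; ring_nf

lemma moment : ∑ α : ZMod q, ∑ β : ZMod q,
    (K2 q α β * (starRingEnd ℂ) (K2 q α β))^2 = (q:ℂ)^2 * (S4 q).card := by
  classical
  set E := Finset.univ.erase (0 : ZMod q) with hE
  set P4 := (E ×ˢ E) ×ˢ (E ×ˢ E) with hP4
  have e1 : ∀ α β : ZMod q, (K2 q α β * (starRingEnd ℂ) (K2 q α β))^2 =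
      ∑ p ∈ P4, psi q (α * (p.2.1 + p.2.2 - p.1.1 - p.1.2)) *
        psi q (β * (p.2.1⁻¹ + p.2.2⁻¹ - p.1.1⁻¹ - p.1.2⁻¹)) := by
    intro α β
    have h1 : (K2 q α β * (starRingEnd ℂ) (K2 q α β))^2 =
        (K2 q α β * K2 q α β) * ((starRingEnd ℂ) (K2 q α β) * (starRingEnd ℂ) (K2 q α β)) := by
      ring
    rw [h1, K2_conj, K2, Finset.sum_mul_sum, Finset.sum_mul_sum,
      ← Finset.sum_product' (s := E) (t := E), ← Finset.sum_product' (s := E) (t := E),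
      Finset.sum_mul_sum, ← Finset.sum_product' (s := E ×ˢ E) (t := E ×ˢ E)]
    refine Finset.sum_congr rfl fun p _ => ?_
    rw [← AddChar.map_add_eq_mul, ← AddChar.map_add_eq_mul, ← AddChar.map_add_eq_mul,
      ← AddChar.map_add_eq_mul]
    congr 1
    ring
  simp_rw [e1]
  have swap1 : ∀ α : ZMod q, ∑ β : ZMod q, ∑ p ∈ P4,
      psi q (α * (p.2.1 + p.2.2 - p.1.1 - p.1.2)) *
        psi q (β * (p.2.1⁻¹ + p.2.2⁻¹ - p.1.1⁻¹ - p.1.2⁻¹)) =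
      ∑ p ∈ P4, ∑ β : ZMod q, psi q (α * (p.2.1 + p.2.2 - p.1.1 - p.1.2)) *
        psi q (β * (p.2.1⁻¹ + p.2.2⁻¹ - p.1.1⁻¹ - p.1.2⁻¹)) :=
    fun α => Finset.sum_comm
  simp_rw [swap1]
  rw [Finset.sum_comm]
  have inner : ∀ p ∈ P4, ∑ α : ZMod q, ∑ β : ZMod q,
      psi q (α * (p.2.1 + p.2.2 - p.1.1 - p.1.2)) *
        psi q (β * (p.2.1⁻¹ + p.2.2⁻¹ - p.1.1⁻¹ - p.1.2⁻¹)) =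
      (if p.2.1 + p.2.2 - p.1.1 - p.1.2 = 0 then (q:ℂ) else 0) *
      (if p.2.1⁻¹ + p.2.2⁻¹ - p.1.1⁻¹ - p.1.2⁻¹ = 0 then (q:ℂ) else 0) := by
    intro p _
    rw [← ort, ← ort, Finset.sum_mul_sum]
  rw [Finset.sum_congr rfl inner]
  have final : ∀ p ∈ P4,
      (if p.2.1 + p.2.2 - p.1.1 - p.1.2 = 0 then (q:ℂ) else 0) *
      (if p.2.1⁻¹ + p.2.2⁻¹ - p.1.1⁻¹ - p.1.2⁻¹ = 0 then (q:ℂ) else 0) =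
      (q:ℂ)^2 * (if p.1.1 + p.1.2 = p.2.1 + p.2.2 ∧ p.1.1⁻¹ + p.1.2⁻¹ = p.2.1⁻¹ + p.2.2⁻¹
        then 1 else 0) := by
    intro p _
    by_cases h1 : p.1.1 + p.1.2 = p.2.1 + p.2.2 <;>
      by_cases h2 : p.1.1⁻¹ + p.1.2⁻¹ = p.2.1⁻¹ + p.2.2⁻¹ <;>
      simp [h1, h2, sub_eq_zero, sub_sub, eq_comm, sq] <;> tauto
  rw [Finset.sum_congr rfl final, ← Finset.mul_sum]
  congr 1
  rw [S4, ← hE, ← hP4, Finset.sum_boole]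

lemma S4_card : ((S4 q).card : ℝ) ≤ 3 * q^2 := by
  classical
  set T1 : Finset ((ZMod q × ZMod q) × (ZMod q × ZMod q)) :=
    Finset.univ.image (fun p : ZMod q × ZMod q => (p, p)) with hT1
  set T2 : Finset ((ZMod q × ZMod q) × (ZMod q × ZMod q)) :=
    Finset.univ.image (fun p : ZMod q × ZMod q => (p, (p.2, p.1))) with hT2
  set T3 : Finset ((ZMod q × ZMod q) × (ZMod q × ZMod q)) :=
    Finset.univ.image (fun p : ZMod q × ZMod q => ((p.1, -p.1), (p.2, -p.2))) with hT3
  have hsub : S4 q ⊆ T1 ∪ T2 ∪ T3 := by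
    intro p hp
    rw [S4, Finset.mem_filter] at hp
    obtain ⟨hmem, h1, h2⟩ := hp
    rw [Finset.mem_product, Finset.mem_product, Finset.mem_product] at hmem
    obtain ⟨⟨ht1, ht2⟩, hu1, hu2⟩ := hmem
    rw [Finset.mem_erase] at ht1 ht2 hu1 hu2
    obtain ⟨ht1, -⟩ := ht1; obtain ⟨ht2, -⟩ := ht2
    obtain ⟨hu1, -⟩ := hu1; obtain ⟨hu2, -⟩ := hu2
    obtain ⟨⟨t1, t2⟩, u1, u2⟩ := p
    simp only at h1 h2 ht1 ht2 hu1 hu2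
    by_cases hσ : t1 + t2 = 0
    · -- third case
      have hu : u1 + u2 = 0 := by rw [← h1, hσ]
      refine Finset.mem_union_right _ ?_
      rw [hT3, Finset.mem_image]
      exact ⟨(t1, u1), Finset.mem_univ _, by
        simp [show t2 = -t1 by linear_combination hσ, show u2 = -u1 by linear_combination hu]⟩
    · -- product equality
      have hprod : u1 * u2 = t1 * t2 := by
        have e1 : t1⁻¹ + t2⁻¹ = (t1 + t2) * (t1 * t2)⁻¹ := by field_simp; ring
        have e2 : u1⁻¹ + u2⁻¹ = (u1 + u2) * (u1 * u2)⁻¹ := by field_simp; ring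
        rw [e1, e2, ← h1] at h2
        have h2' : (t1*t2)⁻¹ = (u1*u2)⁻¹ := mul_left_cancel₀ hσ h2
        have := congrArg (·⁻¹) h2'
        simpa using this.symm
      have hquad : (u1 - t1) * (u1 - t2) = 0 := by
        have : u2 = t1 + t2 - u1 := by linear_combination -h1
        rw [this] at hprod
        linear_combination -hprod
      rcases mul_eq_zero.mp hquad with h | h
      · refine Finset.mem_union_left _ (Finset.mem_union_left _ ?_)
        rw [hT1, Finset.mem_image]
        have hu1t : u1 = t1 := by linear_combination h
        have hu2t : u2 = t2 := by linear_combination -h1 - h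
        exact ⟨(t1, t2), Finset.mem_univ _, by simp [hu1t, hu2t]⟩
      · refine Finset.mem_union_left _ (Finset.mem_union_right _ ?_)
        rw [hT2, Finset.mem_image]
        have hu1t : u1 = t2 := by linear_combination h
        have hu2t : u2 = t1 := by linear_combination -h1 - h
        exact ⟨(t1, t2), Finset.mem_univ _, by simp [hu1t, hu2t]⟩
  have hcard : (S4 q).card ≤ T1.card + T2.card + T3.card := by
    calc (S4 q).card ≤ (T1 ∪ T2 ∪ T3).card := Finset.card_le_card hsub
    _ ≤ (T1 ∪ T2).card + T3.card := Finset.card_union_le _ _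
    _ ≤ T1.card + T2.card + T3.card := by
        have := Finset.card_union_le T1 T2; omega
  have hq2 : ∀ T : Finset ((ZMod q × ZMod q) × (ZMod q × ZMod q)),
      (∃ f : ZMod q × ZMod q → _, T = Finset.univ.image f) → T.card ≤ q^2 := by
    rintro T ⟨f, rfl⟩
    calc (Finset.univ.image f).card ≤ (Finset.univ : Finset (ZMod q × ZMod q)).card :=
          Finset.card_image_le
    _ = q^2 := by simp [Finset.card_univ, ZMod.card, sq]
  have h1 := hq2 T1 ⟨_, hT1⟩
  have h2 := hq2 T2 ⟨_, hT2⟩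
  have h3 := hq2 T3 ⟨_, hT3⟩
  have : (S4 q).card ≤ 3 * q^2 := by omega
  exact_mod_cast this

lemma kbound (lam : ZMod q) (hlam : lam ≠ 0) (s : ZMod q) :
    (‖K2 q lam s‖)^4 ≤ 6 * (q:ℝ)^3 := by
  classical
  have hq2 : 2 ≤ q := (Fact.out : q.Prime).two_le
  set E := Finset.univ.erase (0 : ZMod q) with hE
  -- substitution invariance
  have hsub : ∀ c : ZMod q, c ≠ 0 → K2 q (c*lam) (c⁻¹*s) = K2 q lam s := by
    intro c hc
    rw [K2, K2]
    refine Finset.sum_nbij' (i := fun u => c*u) (j := fun t => c⁻¹*t) ?_ ?_ ?_ ?_ ?_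
    · intro u hu
      rw [Finset.mem_erase] at hu ⊢
      exact ⟨mul_ne_zero hc hu.1, Finset.mem_univ _⟩
    · intro t ht
      rw [Finset.mem_erase] at ht ⊢
      exact ⟨mul_ne_zero (inv_ne_zero hc) ht.1, Finset.mem_univ _⟩
    · intro u hu; field_simp
    · intro t ht; field_simp
    · intro u hu
      rw [Finset.mem_erase] at hu
      congr 1
      rw [mul_inv]
      field_simp
  -- real moment
  have hMom : ∑ α : ZMod q, ∑ β : ZMod q, (Complex.normSq (K2 q α β))^2
      = (q:ℝ)^2 * (S4 q).card := by
    have := moment (q := q)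
    simp_rw [Complex.mul_conj] at this
    exact_mod_cast this
  -- injectivity
  set f : ZMod q → ZMod q × ZMod q := fun c => (c*lam, c⁻¹*s) with hf
  have hinj : ∀ x ∈ E, ∀ y ∈ E, f x = f y → x = y := by
    intro x _ y _ hxy
    rw [hf, Prod.ext_iff] at hxy
    exact mul_right_cancel₀ hlam hxy.1
  have himg : ∑ c ∈ E, (Complex.normSq (K2 q (f c).1 (f c).2))^2
      = ∑ p ∈ E.image f, (Complex.normSq (K2 q p.1 p.2))^2 :=
    (Finset.sum_image (f := fun p : ZMod q × ZMod q => (Complex.normSq (K2 q p.1 p.2))^2) (g := f) hinj).symm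
  have hconst : ∑ c ∈ E, (Complex.normSq (K2 q (f c).1 (f c).2))^2
      = E.card * (Complex.normSq (K2 q lam s))^2 := by
    rw [Finset.sum_congr rfl (fun c hc => ?_), Finset.sum_const, nsmul_eq_mul]
    rw [Finset.mem_erase] at hc
    rw [hf]
    simp only
    rw [hsub c hc.1]
  have hle : ∑ p ∈ E.image f, (Complex.normSq (K2 q p.1 p.2))^2
      ≤ ∑ p : ZMod q × ZMod q, (Complex.normSq (K2 q p.1 p.2))^2 := by
    refine Finset.sum_le_sum_of_subset_of_nonneg (Finset.subset_univ _) ?_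
    intro p _ _
    positivity
  have htot : ∑ p : ZMod q × ZMod q, (Complex.normSq (K2 q p.1 p.2))^2
      = (q:ℝ)^2 * (S4 q).card := by
    rw [Fintype.sum_prod_type, hMom]
  have hEcard : (E.card : ℝ) = (q:ℝ) - 1 := by
    rw [hE, Finset.card_erase_of_mem (Finset.mem_univ _), Finset.card_univ, ZMod.card]
    have : 1 ≤ q := by omega
    push_cast [Nat.cast_sub this]
    ring
  -- combine
  have key : ((q:ℝ) - 1) * (Complex.normSq (K2 q lam s))^2 ≤ 3 * (q:ℝ)^4 := by
    calc ((q:ℝ) - 1) * (Complex.normSq (K2 q lam s))^2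
        = ∑ p ∈ E.image f, (Complex.normSq (K2 q p.1 p.2))^2 := by
          rw [← himg, hconst, hEcard]
      _ ≤ (q:ℝ)^2 * (S4 q).card := le_trans hle (le_of_eq htot)
      _ ≤ (q:ℝ)^2 * (3 * q^2) := by
          have := S4_card (q := q)
          have hq0 : (0:ℝ) ≤ (q:ℝ)^2 := by positivity
          nlinarith
      _ = 3 * (q:ℝ)^4 := by ring
  have habs : (‖K2 q lam s‖)^4 = (Complex.normSq (K2 q lam s))^2 := by
    rw [← Complex.sq_norm]; ring
  rw [habs]
  have hqR : (2:ℝ) ≤ (q:ℝ) := by exact_mod_cast hq2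
  nlinarith [Complex.normSq_nonneg (K2 q lam s), sq_nonneg (Complex.normSq (K2 q lam s))]

theorem stmt6 (q : ℕ) (hq : q.Prime) (𝒜 ℬ : Finset (ZMod q × ZMod q))
    (hcard : 16 * (q : ℝ) ^ ((15 : ℝ) / 4) ≤ (𝒜.card : ℝ) * (ℬ.card : ℝ)) :
    ∀ lam : ZMod q, lam ≠ 0 →
      ∃ a ∈ 𝒜, ∃ b ∈ ℬ, (a.1 - b.1) * (a.2 - b.2) = lam := by
  intro lam hlam
  haveI : Fact q.Prime := ⟨hq⟩
  classical
  have hq2 : 2 ≤ q := hq.two_le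
  have hqR : (2:ℝ) ≤ (q:ℝ) := by exact_mod_cast hq2
  have hqR0 : (0:ℝ) < (q:ℝ) := by linarith
  have hq0C : (q:ℂ) ≠ 0 := by simp only [ne_eq, Nat.cast_eq_zero]; omega
  set E := Finset.univ.erase (0 : ZMod q) with hE
  set A : ZMod q × ZMod q → ℂ := fun ξ => ∑ a ∈ 𝒜, psi q (ξ.1*a.1 + ξ.2*a.2) with hA
  set B' : ZMod q × ZMod q → ℂ := fun ξ => ∑ b ∈ ℬ, psi q (-(ξ.1*b.1 + ξ.2*b.2)) with hB'
  set S : Finset ((ZMod q × ZMod q) × (ZMod q × ZMod q)) :=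
    (𝒜 ×ˢ ℬ).filter (fun p => (p.1.1 - p.2.1) * (p.1.2 - p.2.2) = lam) with hS
  suffices hSne : S.Nonempty by
    obtain ⟨⟨a, b⟩, hab⟩ := hSne
    rw [hS, Finset.mem_filter, Finset.mem_product] at hab
    exact ⟨a, hab.1.1, b, hab.1.2, hab.2⟩
  rw [← Finset.card_pos]
  set F : ZMod q → ℂ :=
    fun t => ∑ p ∈ 𝒜 ×ˢ ℬ, psi q (t * ((p.1.1-p.2.1)*(p.1.2-p.2.2) - lam)) with hF
  have step1 : (S.card : ℂ) * q = ∑ t : ZMod q, F t := by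
    rw [hF, Finset.sum_comm]
    have hp : ∀ p ∈ 𝒜 ×ˢ ℬ, ∑ t : ZMod q, psi q (t * ((p.1.1-p.2.1)*(p.1.2-p.2.2) - lam))
        = if (p.1.1-p.2.1)*(p.1.2-p.2.2) = lam then (q:ℂ) else 0 := by
      intro p _
      rw [ort]
      congr 1
      rw [eq_iff_iff, sub_eq_zero]
    rw [Finset.sum_congr rfl hp, Finset.sum_ite, Finset.sum_const, Finset.sum_const_zero,
      add_zero, nsmul_eq_mul, hS]
  have hF0 : F 0 = (𝒜.card : ℂ) * (ℬ.card : ℂ) := by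
    rw [hF]
    simp
  have hFt : ∀ t ∈ E, F t = (q:ℂ)⁻¹ *
      ∑ ξ : ZMod q × ZMod q, psi q (-(t*lam) - t⁻¹*(ξ.1*ξ.2)) * (A ξ * B' ξ) := by
    intro t htE
    rw [hE, Finset.mem_erase] at htE
    have ht : t ≠ 0 := htE.1
    have h1 : ∀ p ∈ 𝒜 ×ˢ ℬ, psi q (t * ((p.1.1-p.2.1)*(p.1.2-p.2.2) - lam)) =
        psi q (-(t*lam)) * ((q:ℂ)⁻¹ *
          ∑ ξ : ZMod q × ZMod q, psi q (ξ.1*(p.1.1-p.2.1) + ξ.2*(p.1.2-p.2.2) - ξ.1*ξ.2*t⁻¹)) := by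
      intro p _
      rw [star_id t ht, inv_mul_cancel_left₀ hq0C, ← AddChar.map_add_eq_mul]
      congr 1
      ring
    have h2 : ∀ ξ : ZMod q × ZMod q, ∑ p ∈ 𝒜 ×ˢ ℬ,
        psi q (ξ.1*(p.1.1-p.2.1) + ξ.2*(p.1.2-p.2.2) - ξ.1*ξ.2*t⁻¹) =
        psi q (-(t⁻¹*(ξ.1*ξ.2))) * (A ξ * B' ξ) := by
      intro ξ
      have hsplit : ∀ p ∈ 𝒜 ×ˢ ℬ,
          psi q (ξ.1*(p.1.1-p.2.1) + ξ.2*(p.1.2-p.2.2) - ξ.1*ξ.2*t⁻¹) =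
          psi q (-(t⁻¹*(ξ.1*ξ.2))) *
            (psi q (ξ.1*p.1.1 + ξ.2*p.1.2) * psi q (-(ξ.1*p.2.1 + ξ.2*p.2.2))) := by
        intro p _
        rw [← AddChar.map_add_eq_mul, ← AddChar.map_add_eq_mul]
        congr 1
        ring
      rw [Finset.sum_congr rfl hsplit, ← Finset.mul_sum]
      congr 1
      rw [Finset.sum_product, hA, hB']
      simp only
      rw [Finset.sum_mul_sum]
    have hcomb : ∀ ξ : ZMod q × ZMod q,
        psi q (-(t*lam) - t⁻¹*(ξ.1*ξ.2)) * (A ξ * B' ξ) =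
        psi q (-(t*lam)) * (psi q (-(t⁻¹*(ξ.1*ξ.2))) * (A ξ * B' ξ)) := by
      intro ξ
      have hx : psi q (-(t*lam) - t⁻¹*(ξ.1*ξ.2)) =
          psi q (-(t*lam)) * psi q (-(t⁻¹*(ξ.1*ξ.2))) := by
        rw [← AddChar.map_add_eq_mul]
        congr 1
        ring
      rw [hx]
      ring
    rw [show F t = ∑ p ∈ 𝒜 ×ˢ ℬ, psi q (t * ((p.1.1-p.2.1)*(p.1.2-p.2.2) - lam)) from rfl,
      Finset.sum_congr rfl h1, ← Finset.mul_sum, ← Finset.mul_sum, Finset.sum_comm,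
      Finset.sum_congr rfl (fun ξ _ => h2 ξ)]
    rw [Finset.sum_congr rfl (fun ξ _ => hcomb ξ), ← Finset.mul_sum]
    ring
  have herr : ∑ t ∈ E, F t = (q:ℂ)⁻¹ *
      ∑ ξ : ZMod q × ZMod q, A ξ * B' ξ * K2 q lam (ξ.1*ξ.2) := by
    have hAB : ∀ ξ : ZMod q × ZMod q, A ξ * B' ξ * K2 q lam (ξ.1*ξ.2) =
        ∑ t ∈ E, psi q (-(t*lam) - t⁻¹*(ξ.1*ξ.2)) * (A ξ * B' ξ) := by
      intro ξ
      rw [K2, ← hE, Finset.mul_sum (s := E)]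
      exact Finset.sum_congr rfl fun t _ => by ring
    rw [Finset.sum_congr rfl hFt, ← Finset.mul_sum]
    congr 1
    rw [Finset.sum_comm]
    exact Finset.sum_congr rfl fun ξ _ => (hAB ξ).symm
  have hidentity : (S.card : ℂ) * q = ((𝒜.card : ℂ) * (ℬ.card : ℂ)) +
      (q:ℂ)⁻¹ * ∑ ξ : ZMod q × ZMod q, A ξ * B' ξ * K2 q lam (ξ.1*ξ.2) := by
    rw [step1, ← Finset.sum_erase_add Finset.univ F (Finset.mem_univ 0), hF0, ← hE, herr]
    ring
  -- real quantities
  set M : ℝ := (𝒜.card : ℝ) * (ℬ.card : ℝ) with hM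
  have hM0 : 0 < M := by
    refine lt_of_lt_of_le ?_ hcard
    positivity
  set m : ℝ := Real.sqrt M with hm
  have hm2 : m^2 = M := Real.sq_sqrt hM0.le
  have hm0 : 0 < m := Real.sqrt_pos.2 hM0
  -- Parseval real versions
  have hPA : ∑ ξ : ZMod q × ZMod q, (‖A ξ‖)^2 = (q:ℝ)^2 * 𝒜.card := by
    have h := parseval 𝒜
    simp_rw [Complex.mul_conj] at h
    have h2 : ∑ ξ : ZMod q × ZMod q, (Complex.normSq (A ξ)) = (q:ℝ)^2 * 𝒜.card := by
      exact_mod_cast h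
    simp_rw [Complex.sq_norm]
    exact h2
  have hPB : ∑ ξ : ZMod q × ZMod q, (‖B' ξ‖)^2 = (q:ℝ)^2 * ℬ.card := by
    have hconjB : ∀ ξ : ZMod q × ZMod q,
        B' ξ = (starRingEnd ℂ) (∑ b ∈ ℬ, psi q (ξ.1*b.1 + ξ.2*b.2)) := by
      intro ξ
      rw [map_sum, hB']
      exact Finset.sum_congr rfl fun b _ => (psi_conj _).symm
    have h := parseval ℬ
    simp_rw [Complex.mul_conj] at h
    have h2 : ∑ ξ : ZMod q × ZMod q,
        (Complex.normSq (∑ b ∈ ℬ, psi q (ξ.1*b.1 + ξ.2*b.2))) = (q:ℝ)^2 * ℬ.card := by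
      exact_mod_cast h
    simp_rw [hconjB, Complex.norm_conj, Complex.sq_norm]
    exact h2
  -- kappa
  have hne : (Finset.univ : Finset (ZMod q)).Nonempty := ⟨0, Finset.mem_univ 0⟩
  set κ : ℝ := Finset.univ.sup' hne (fun s => ‖K2 q lam s‖) with hκdef
  have hκ : ∀ s, ‖K2 q lam s‖ ≤ κ := fun s => Finset.le_sup' (fun s => ‖K2 q lam s‖) (Finset.mem_univ s)
  have hκ0 : 0 ≤ κ := le_trans (norm_nonneg _) (hκ 0)
  have hκ4 : κ^4 ≤ 6*(q:ℝ)^3 := by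
    obtain ⟨s0, _, hs0⟩ := Finset.exists_mem_eq_sup' hne (fun s => ‖K2 q lam s‖)
    rw [hκdef, hs0]
    exact kbound lam hlam s0
  -- Cauchy-Schwarz
  have hCS : ∑ ξ : ZMod q × ZMod q, ‖A ξ‖ * ‖B' ξ‖ ≤ (q:ℝ)^2 * m := by
    have h2 := Finset.sum_mul_sq_le_sq_mul_sq Finset.univ
      (fun ξ => ‖A ξ‖) (fun ξ => ‖B' ξ‖)
    rw [hPA, hPB] at h2
    have hrhs : ((q:ℝ)^2 * 𝒜.card) * ((q:ℝ)^2 * ℬ.card) = ((q:ℝ)^2 * m)^2 := by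
      rw [mul_pow, hm2, hM]
      ring
    rw [hrhs] at h2
    have hL0 : (0:ℝ) ≤ ∑ ξ : ZMod q × ZMod q, ‖A ξ‖ * ‖B' ξ‖ := by
      apply Finset.sum_nonneg
      intro ξ _
      positivity
    have hR0 : (0:ℝ) ≤ (q:ℝ)^2 * m := by positivity
    nlinarith
  -- bound the error sum
  have hSig : ‖∑ ξ : ZMod q × ZMod q, A ξ * B' ξ * K2 q lam (ξ.1*ξ.2)‖ ≤
      κ * ((q:ℝ)^2 * m) := by
    calc ‖∑ ξ : ZMod q × ZMod q, A ξ * B' ξ * K2 q lam (ξ.1*ξ.2)‖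
        ≤ ∑ ξ : ZMod q × ZMod q, ‖A ξ * B' ξ * K2 q lam (ξ.1*ξ.2)‖ :=
          norm_sum_le _ _
      _ = ∑ ξ : ZMod q × ZMod q,
            ‖A ξ‖ * ‖B' ξ‖ * ‖K2 q lam (ξ.1*ξ.2)‖ := by
          simp [map_mul]
      _ ≤ ∑ ξ : ZMod q × ZMod q, ‖A ξ‖ * ‖B' ξ‖ * κ := by
          refine Finset.sum_le_sum fun ξ _ => ?_
          refine mul_le_mul_of_nonneg_left (hκ _) ?_
          positivity
      _ = (∑ ξ : ZMod q × ZMod q, ‖A ξ‖ * ‖B' ξ‖) * κ := by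
          rw [← Finset.sum_mul]
      _ ≤ ((q:ℝ)^2 * m) * κ := mul_le_mul_of_nonneg_right hCS hκ0
      _ = κ * ((q:ℝ)^2 * m) := by ring
  -- real inequality
  have hkey : |(S.card : ℝ) * q - M| ≤ κ * (q:ℝ) * m := by
    have hdiff : (S.card : ℂ) * q - ((𝒜.card : ℂ) * (ℬ.card : ℂ)) =
        (q:ℂ)⁻¹ * ∑ ξ : ZMod q × ZMod q, A ξ * B' ξ * K2 q lam (ξ.1*ξ.2) := by
      rw [hidentity]; ring
    have hcast : ((S.card : ℝ) * q - M : ℝ) =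
        ((S.card : ℂ) * q - ((𝒜.card : ℂ) * (ℬ.card : ℂ))).re := by
      rw [hM]
      push_cast
      simp
    have habs : ‖(S.card : ℂ) * q - ((𝒜.card : ℂ) * (ℬ.card : ℂ))‖ ≤
        κ * (q:ℝ) * m := by
      rw [hdiff, norm_mul, norm_inv, Complex.norm_natCast]
      calc (q:ℝ)⁻¹ * ‖∑ ξ : ZMod q × ZMod q, A ξ * B' ξ * K2 q lam (ξ.1*ξ.2)‖
          ≤ (q:ℝ)⁻¹ * (κ * ((q:ℝ)^2 * m)) := by
            refine mul_le_mul_of_nonneg_left hSig ?_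
            positivity
        _ = κ * (q:ℝ) * m := by
            field_simp
    calc |(S.card : ℝ) * q - M| = ‖(S.card : ℂ) * q -
          ((𝒜.card : ℂ) * (ℬ.card : ℂ))‖ := by
          rw [← Real.norm_eq_abs, ← Complex.norm_real]
          congr 1
          rw [hM]
          push_cast
          ring
      _ ≤ κ * (q:ℝ) * m := habs
  -- rpow estimates : m^4 = M^2 ≥ 256 q^7
  have hm4 : 256 * (q:ℝ)^(7:ℕ) ≤ m^4 := by
    have h1 : ((q:ℝ) ^ ((15:ℝ)/4))^2 = (q:ℝ)^((15:ℝ)/2) := by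
      rw [← Real.rpow_natCast ((q:ℝ)^((15:ℝ)/4)) 2, ← Real.rpow_mul (le_of_lt hqR0)]
      norm_num
    have hq1 : (1:ℝ) ≤ (q:ℝ) := by linarith
    have h2 : (q:ℝ)^((7:ℕ):ℝ) ≤ (q:ℝ)^((15:ℝ)/2) := by
      refine Real.rpow_le_rpow_of_exponent_le hq1 ?_
      norm_num
    rw [Real.rpow_natCast] at h2
    have h3 : m^4 = M^2 := by rw [← hm2]; ring
    have h4 : (16 * (q:ℝ) ^ ((15:ℝ)/4))^2 ≤ M^2 := by
      have h0 : (0:ℝ) ≤ 16 * (q:ℝ) ^ ((15:ℝ)/4) := by positivity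
      exact pow_le_pow_left₀ h0 hcard 2
    rw [h3]
    calc 256 * (q:ℝ)^(7:ℕ) ≤ 256 * (q:ℝ)^((15:ℝ)/2) := by
          exact mul_le_mul_of_nonneg_left h2 (by norm_num)
      _ = (16 * (q:ℝ) ^ ((15:ℝ)/4))^2 := by rw [mul_pow, h1]; norm_num
      _ ≤ M^2 := h4
  -- final strict bound : κ q < m
  have hκqm : κ * (q:ℝ) < m := by
    refine lt_of_pow_lt_pow_left₀ 4 hm0.le ?_
    have hq7 : (0:ℝ) < (q:ℝ)^(7:ℕ) := by positivity
    calc (κ * (q:ℝ))^4 = κ^4 * (q:ℝ)^(4:ℕ) := by ring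
      _ ≤ (6*(q:ℝ)^3) * (q:ℝ)^(4:ℕ) := by
          refine mul_le_mul_of_nonneg_right hκ4 ?_
          positivity
      _ = 6 * (q:ℝ)^(7:ℕ) := by ring
      _ < 256 * (q:ℝ)^(7:ℕ) := by
          have := hq7
          linarith
      _ ≤ m^4 := hm4
  -- conclude
  have hpos : (0:ℝ) < (S.card : ℝ) * q := by
    have h1 : M - κ * (q:ℝ) * m ≤ (S.card : ℝ) * q := by
      have := (abs_le.mp hkey).1
      linarith
    have h2 : κ * (q:ℝ) * m < m * m := by
      exact mul_lt_mul_of_pos_right hκqm hm0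
    have h3 : m * m = M := by rw [← hm2]; ring
    linarith
  have : (0:ℝ) < (S.card : ℝ) := by
    by_contra hcon
    push_neg at hcon
    have : (S.card : ℝ) * q ≤ 0 := mul_nonpos_of_nonpos_of_nonneg hcon hqR0.le
    linarith
  exact_mod_cast this
end

section
/- Let q be a positive integer and let 𝒜 ⊆ Z_q × Z_q be a set. Let G ⊆ SL_2(Z_q) be the set of matrices of the form [[−α, αβ+1], [−1, β]] with (α, β) ∈ 𝒜. Then the multiplicative energy of G, namely the number of quadruples (g_1, g_2, g_3, g_4) ∈ G⁴ with g_1·g_2^{-1} = g_3·g_4^{-1}, is at most τ(q)·q·|𝒜|². -/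
instance (q : ℕ) : DecidableEq (Matrix.SpecialLinearGroup (Fin 2) (ZMod q)) :=
  fun a b => decidable_of_iff ((a : Matrix (Fin 2) (Fin 2) (ZMod q)) = b) Subtype.coe_inj

lemma aux_constraint (q : ℕ) (a1 b1 a2 b2 a3 b3 a4 b4 : ZMod q)
    (hcoe : (!![-a1, a1*b1+1; -1, b1] : Matrix (Fin 2) (Fin 2) (ZMod q)) *
        Matrix.adjugate !![-a2, a2*b2+1; -1, b2] =
      !![-a3, a3*b3+1; -1, b3] * Matrix.adjugate !![-a4, a4*b4+1; -1, b4]) :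
    (a1 - a3) * (b1 - b2) = 0 := by
  rw [Matrix.adjugate_fin_two, Matrix.adjugate_fin_two, Matrix.mul_fin_two,
    Matrix.mul_fin_two] at hcoe
  have e00 := congrFun (congrFun hcoe 0) 0
  have e10 := congrFun (congrFun hcoe 1) 0
  simp at e00 e10
  linear_combination e00 - a3 * e10

theorem stmt11 (q : ℕ) (hq : 0 < q) (𝒜 : Finset (ZMod q × ZMod q))
    (G : Finset (Matrix.SpecialLinearGroup (Fin 2) (ZMod q)))
    (hG : ∀ g : Matrix.SpecialLinearGroup (Fin 2) (ZMod q),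
      g ∈ G ↔ ∃ p ∈ 𝒜,
        (g : Matrix (Fin 2) (Fin 2) (ZMod q)) = !![-p.1, p.1 * p.2 + 1; -1, p.2]) :
    (((G ×ˢ G) ×ˢ (G ×ˢ G)).filter
        (fun x => x.1.1 * x.1.2⁻¹ = x.2.1 * x.2.2⁻¹)).card
      ≤ q.divisors.card * q * 𝒜.card ^ 2 := by
  haveI : NeZero q := ⟨hq.ne'⟩
  set P : Matrix.SpecialLinearGroup (Fin 2) (ZMod q) → ZMod q × ZMod q := fun g => (-((g : Matrix (Fin 2) (Fin 2) (ZMod q)) 0 0),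
    (g : Matrix (Fin 2) (Fin 2) (ZMod q)) 1 1) with hPdef
  have hP : ∀ g ∈ G, P g ∈ 𝒜 ∧ (g : Matrix (Fin 2) (Fin 2) (ZMod q)) =
      !![-(P g).1, (P g).1 * (P g).2 + 1; -1, (P g).2] := by
    intro g hg
    obtain ⟨p, hp, hm⟩ := (hG g).1 hg
    have h1 : P g = p := by
      simp only [hPdef, hm]
      simp [Prod.ext_iff]
    rw [h1]; exact ⟨hp, hm⟩
  -- the triple set
  set T : Finset ((ZMod q × ZMod q) × (ZMod q × ZMod q) × (ZMod q × ZMod q)) :=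
    (𝒜 ×ˢ 𝒜 ×ˢ 𝒜).filter (fun t => (t.1.1 - t.2.2.1) * (t.1.2 - t.2.1.2) = 0) with hTdef
  have step1 : (((G ×ˢ G) ×ˢ (G ×ˢ G)).filter
      (fun x => x.1.1 * x.1.2⁻¹ = x.2.1 * x.2.2⁻¹)).card ≤ T.card := by
    apply Finset.card_le_card_of_injOn (fun z => (P z.1.1, P z.1.2, P z.2.1))
    · intro z hz
      simp only [Finset.mem_coe, Finset.mem_filter, Finset.mem_product] at hz
      obtain ⟨⟨⟨h1, h2⟩, h3, h4⟩, heq⟩ := hz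
      obtain ⟨hm1A, hm1⟩ := hP _ h1
      obtain ⟨hm2A, hm2⟩ := hP _ h2
      obtain ⟨hm3A, hm3⟩ := hP _ h3
      obtain ⟨hm4A, hm4⟩ := hP _ h4
      rw [hTdef, Finset.mem_coe, Finset.mem_filter, Finset.mem_product, Finset.mem_product]
      refine ⟨⟨hm1A, hm2A, hm3A⟩, ?_⟩
      -- derive the constraint from matrix equality
      have hcoe : (z.1.1 : Matrix (Fin 2) (Fin 2) (ZMod q)) *
            Matrix.adjugate (z.1.2 : Matrix (Fin 2) (Fin 2) (ZMod q)) =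
          (z.2.1 : Matrix (Fin 2) (Fin 2) (ZMod q)) *
            Matrix.adjugate (z.2.2 : Matrix (Fin 2) (Fin 2) (ZMod q)) := by
        have := congrArg (fun g : Matrix.SpecialLinearGroup (Fin 2) (ZMod q) =>
          (g : Matrix (Fin 2) (Fin 2) (ZMod q))) heq
        simpa [Matrix.SpecialLinearGroup.coe_inv] using this
      rw [hm1, hm2, hm3, hm4] at hcoe
      exact aux_constraint q _ _ _ _ _ _ _ _ hcoe
    · intro z hz z' hz' himg
      simp only [Finset.mem_coe, Finset.mem_filter, Finset.mem_product] at hz hz'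
      obtain ⟨⟨⟨h1, h2⟩, h3, h4⟩, heq⟩ := hz
      obtain ⟨⟨⟨h1', h2'⟩, h3', h4'⟩, heq'⟩ := hz'
      have hp1 : P z.1.1 = P z'.1.1 := congrArg Prod.fst himg
      have hp2 : P z.1.2 = P z'.1.2 := congrArg (fun t => t.2.1) himg
      have hp3 : P z.2.1 = P z'.2.1 := congrArg (fun t => t.2.2) himg
      have g1 : z.1.1 = z'.1.1 := Subtype.ext (by rw [(hP _ h1).2, (hP _ h1').2, hp1])
      have g2 : z.1.2 = z'.1.2 := Subtype.ext (by rw [(hP _ h2).2, (hP _ h2').2, hp2])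
      have g3 : z.2.1 = z'.2.1 := Subtype.ext (by rw [(hP _ h3).2, (hP _ h3').2, hp3])
      have g4 : z.2.2 = z'.2.2 := by
        have e1 : z.2.2 = z.1.2 * z.1.1⁻¹ * z.2.1 := by
          calc z.2.2 = z.1.2 * z.1.1⁻¹ * (z.1.1 * z.1.2⁻¹) * z.2.2 := by group
            _ = z.1.2 * z.1.1⁻¹ * (z.2.1 * z.2.2⁻¹) * z.2.2 := by rw [heq]
            _ = z.1.2 * z.1.1⁻¹ * z.2.1 := by group
        have e2 : z'.2.2 = z'.1.2 * z'.1.1⁻¹ * z'.2.1 := by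
          calc z'.2.2 = z'.1.2 * z'.1.1⁻¹ * (z'.1.1 * z'.1.2⁻¹) * z'.2.2 := by group
            _ = z'.1.2 * z'.1.1⁻¹ * (z'.2.1 * z'.2.2⁻¹) * z'.2.2 := by rw [heq']
            _ = z'.1.2 * z'.1.1⁻¹ * z'.2.1 := by group
        rw [e1, e2, g1, g2, g3]
      exact Prod.ext (Prod.ext g1 g2) (Prod.ext g3 g4)
  -- the divisor decomposition
  set S : ℕ → Finset ((ZMod q × ZMod q) × (ZMod q × ZMod q) × (ZMod q × ZMod q)) :=
    fun e => (𝒜 ×ˢ 𝒜 ×ˢ 𝒜).filter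
      (fun t => e ∣ (t.1.1 - t.2.2.1).val ∧ (q / e) ∣ (t.1.2 - t.2.1.2).val) with hSdef
  have step2 : T ⊆ q.divisors.biUnion S := by
    intro t ht
    rw [hTdef, Finset.mem_filter] at ht
    obtain ⟨htA, ht0⟩ := ht
    set x := t.1.1 - t.2.2.1
    set y := t.1.2 - t.2.1.2
    rw [Finset.mem_biUnion]
    refine ⟨Nat.gcd x.val q, Nat.mem_divisors.2 ⟨Nat.gcd_dvd_right _ _, hq.ne'⟩, ?_⟩
    rw [hSdef, Finset.mem_filter]
    refine ⟨htA, Nat.gcd_dvd_left _ _, ?_⟩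
    have hdvd : q ∣ x.val * y.val := by
      have := ZMod.val_mul x y
      rw [ht0] at this
      simp only [ZMod.val_zero] at this
      exact Nat.dvd_of_mod_eq_zero this.symm
    set e := Nat.gcd x.val q with hedef
    have he : 0 < e := Nat.gcd_pos_of_pos_right _ hq
    have hxe : x.val = e * (x.val / e) := (Nat.mul_div_cancel' (Nat.gcd_dvd_left _ _)).symm
    have hqe : q = e * (q / e) := (Nat.mul_div_cancel' (Nat.gcd_dvd_right _ _)).symm
    have hcop : Nat.Coprime (x.val / e) (q / e) := Nat.coprime_div_gcd_div_gcd he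
    have : (q / e) ∣ (x.val / e) * y.val := by
      have h2 : e * (q / e) ∣ e * ((x.val / e) * y.val) := by
        rw [← hqe, ← mul_assoc, ← hxe]; exact hdvd
      exact (mul_dvd_mul_iff_left he.ne').1 h2
    exact hcop.symm.dvd_of_dvd_mul_left this
  have step3 : ∀ e ∈ q.divisors, (S e).card ≤ q * 𝒜.card ^ 2 := by
    intro e he
    rw [Nat.mem_divisors] at he
    have heq0 : e ≠ 0 := fun h => hq.ne' (by simpa [h] using he.1)
    have hqe : q / e * e = q := Nat.div_mul_cancel he.1
    have hcard : ((Finset.range (q / e) ×ˢ Finset.range e) ×ˢ (𝒜 ×ˢ 𝒜)).card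
        = q * 𝒜.card ^ 2 := by
      simp [Finset.card_product, hqe, sq, mul_assoc]
    rw [← hcard]
    apply Finset.card_le_card_of_injOn
      (fun t => (((t.1.1 - t.2.2.1).val / e, (t.1.2 - t.2.1.2).val / (q / e)), t.2.1, t.2.2))
    · intro t ht
      rw [hSdef, Finset.mem_coe, Finset.mem_filter, Finset.mem_product, Finset.mem_product] at ht
      obtain ⟨⟨hA1, hA2, hA3⟩, hd1, hd2⟩ := ht
      simp only [Finset.mem_coe, Finset.mem_product, Finset.mem_range]
      refine ⟨⟨?_, ?_⟩, hA2, hA3⟩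
      · exact Nat.div_lt_div_of_lt_of_dvd he.1 (ZMod.val_lt _)
      · have := Nat.div_lt_div_of_lt_of_dvd (Nat.div_dvd_of_dvd he.1) (ZMod.val_lt
          (t.1.2 - t.2.1.2))
        rwa [Nat.div_div_self he.1 hq.ne'] at this
    · intro t ht t' ht' himg
      simp only [Finset.mem_coe, hSdef, Finset.mem_filter] at ht ht'
      obtain ⟨-, hd1, hd2⟩ := ht
      obtain ⟨-, hd1', hd2'⟩ := ht'
      have h23 : t.2 = t'.2 := Prod.ext (congrArg (fun z => z.2.1) himg)
        (congrArg (fun z => z.2.2) himg)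
      have hk1 : (t.1.1 - t.2.2.1).val / e = (t'.1.1 - t'.2.2.1).val / e :=
        congrArg (fun z => z.1.1) himg
      have hk2 : (t.1.2 - t.2.1.2).val / (q / e) = (t'.1.2 - t'.2.1.2).val / (q / e) :=
        congrArg (fun z => z.1.2) himg
      have hv1 : (t.1.1 - t.2.2.1).val = (t'.1.1 - t'.2.2.1).val := by
        rw [← Nat.mul_div_cancel' hd1, ← Nat.mul_div_cancel' hd1', hk1]
      have hv2 : (t.1.2 - t.2.1.2).val = (t'.1.2 - t'.2.1.2).val := by
        rw [← Nat.mul_div_cancel' hd2, ← Nat.mul_div_cancel' hd2', hk2]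
      have hx : t.1.1 - t.2.2.1 = t'.1.1 - t'.2.2.1 := ZMod.val_injective _ hv1
      have hy : t.1.2 - t.2.1.2 = t'.1.2 - t'.2.1.2 := ZMod.val_injective _ hv2
      rw [h23] at hx hy
      have h11 : t.1.1 = t'.1.1 := by
        have := sub_left_injective hx
        exact this
      have h12 : t.1.2 = t'.1.2 := by
        have := sub_left_injective hy
        exact this
      exact Prod.ext (Prod.ext h11 h12) h23
  calc (((G ×ˢ G) ×ˢ (G ×ˢ G)).filter
        (fun x => x.1.1 * x.1.2⁻¹ = x.2.1 * x.2.2⁻¹)).card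
      ≤ T.card := step1
    _ ≤ (q.divisors.biUnion S).card := Finset.card_le_card step2
    _ ≤ ∑ e ∈ q.divisors, (S e).card := Finset.card_biUnion_le
    _ ≤ ∑ _e ∈ q.divisors, q * 𝒜.card ^ 2 := Finset.sum_le_sum step3
    _ = q.divisors.card * q * 𝒜.card ^ 2 := by
        rw [Finset.sum_const, smul_eq_mul, mul_assoc]
end

section
/- Let R be a finite ring and S ⊆ R a set, and let k = cov^+(S) be the additive covering number of S, i.e., the least size of a set X ⊆ R with S + X = R. Suppose that for every integer j with 1 ≤ j ≤ k, the image of j in R is a unit. Then cov^×(S−S) ≤ k, i.e., there exists a set Y ⊆ R with |Y| ≤ k and Y·(S−S) = R. -/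
open Pointwise

theorem stmt12 (R : Type*) [Ring R] [Fintype R] [DecidableEq R]
    (S : Finset R) (k : ℕ)
    (hk : IsLeast {n : ℕ | ∃ X : Finset R, X.card = n ∧ S + X = Finset.univ} k)
    (hunit : ∀ j : ℕ, 1 ≤ j → j ≤ k → IsUnit (j : R)) :
    ∃ Y : Finset R, Y.card ≤ k ∧ Y * (S - S) = Finset.univ := by
  obtain ⟨⟨X, hXcard, hXcov⟩, -⟩ := hk
  refine ⟨(Finset.Icc 1 k).image (fun j : ℕ => Ring.inverse ((j : R))), ?_, ?_⟩
  · exact (Finset.card_image_le).trans (by simp)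
  · apply Finset.eq_univ_iff_forall.mpr
    intro a
    have hmem : ∀ j : ℕ, ∃ x ∈ X, ∃ t ∈ S, t + x = (j : ℕ) • a := by
      intro j
      have h : (j • a) ∈ S + X := by rw [hXcov]; exact Finset.mem_univ _
      rw [Finset.mem_add] at h
      obtain ⟨t, ht, x, hx, htx⟩ := h
      exact ⟨x, hx, t, ht, htx⟩
    choose g hgX s hsS hEq using hmem
    have hpig : ∃ j ∈ Finset.range (k+1), ∃ j' ∈ Finset.range (k+1), j ≠ j' ∧ g j = g j' := by
      exact Finset.exists_ne_map_eq_of_card_lt_of_maps_to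
        (by simp [hXcard]) (fun j _ => hgX j)
    obtain ⟨j, hj, j', hj', hne, hgg⟩ := hpig
    wlog hlt : j < j' generalizing j j'
    · exact this j' hj' j hj hne.symm hgg.symm (by omega)
    set d := j' - j with hd
    have hd1 : 1 ≤ d := by omega
    have hdk : d ≤ k := by
      simp only [Finset.mem_range] at hj hj'; omega
    have hda : (d : R) * a = s j' - s j := by
      have h1 := hEq j
      have h2 := hEq j'
      have key : (j' : ℕ) • a - (j : ℕ) • a = s j' - s j := by
        rw [← h1, ← h2, hgg]; abel
      calc (d : R) * a = (d : ℕ) • a := by simp [nsmul_eq_mul]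
        _ = (j' : ℕ) • a - (j : ℕ) • a := by
            rw [hd, sub_nsmul a (le_of_lt hlt)]; abel
        _ = s j' - s j := key
    have hu := hunit d hd1 hdk
    rw [Finset.mem_mul]
    refine ⟨Ring.inverse ((d : R)), Finset.mem_image.mpr ⟨d, Finset.mem_Icc.mpr ⟨hd1, hdk⟩, rfl⟩,
      s j' - s j, Finset.mem_sub.mpr ⟨s j', hsS j', s j, hsS j, rfl⟩, ?_⟩
    rw [← hda, ← mul_assoc, Ring.inverse_mul_cancel _ hu, one_mul]
end

section
/- Let R be a finite ring and A ⊆ R a set with |A| = α|R|, α > 0. Suppose that for every integer j with 1 ≤ j ≤ ⌊α^{-1}⌋, the image of j in R is a unit. Then cov^×(2A − 2A) ≤ α^{-1}, i.e., there exists a set Y ⊆ R with |Y| ≤ α^{-1} and Y·(A + A − A − A) = R. -/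
open Pointwise

theorem stmt13 (R : Type*) [Ring R] [Fintype R] [DecidableEq R]
    (A : Finset R) (α : ℝ) (hA : (A.card : ℝ) = α * Fintype.card R) (hα : 0 < α)
    (hunit : ∀ j : ℕ, 1 ≤ j → j ≤ ⌊α⁻¹⌋₊ → IsUnit (j : R)) :
    ∃ Y : Finset R, (Y.card : ℝ) ≤ α⁻¹ ∧ Y * (A + A - A - A) = Finset.univ := by
  set m := ⌊α⁻¹⌋₊ with hm
  have hRpos : (0:ℝ) < Fintype.card R := by exact_mod_cast Fintype.card_pos
  have hApos : 0 < A.card := by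
    have h : (0:ℝ) < A.card := by rw [hA]; positivity
    exact_mod_cast h
  obtain ⟨a0, ha0⟩ := Finset.card_pos.mp hApos
  refine ⟨(Finset.Icc 1 m).image (fun j : ℕ => Ring.inverse ((j : R))), ?_, ?_⟩
  · calc ((((Finset.Icc 1 m).image (fun j : ℕ => Ring.inverse ((j : R)))).card : ℝ))
        ≤ ((Finset.Icc 1 m).card : ℝ) := by exact_mod_cast Finset.card_image_le
      _ ≤ (m : ℝ) := by
          rw [Nat.card_Icc]
          exact_mod_cast le_refl m
      _ ≤ α⁻¹ := Nat.floor_le (by positivity)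
  · apply Finset.eq_univ_iff_forall.mpr
    intro r
    -- key claim
    have key : ∀ (j k : Fin (m+1)) (a b : R), a ∈ A → b ∈ A → (j:ℕ) < (k:ℕ) →
        (j:ℕ) • r + a = (k:ℕ) • r + b →
        r ∈ (Finset.Icc 1 m).image (fun j : ℕ => Ring.inverse ((j : R))) * (A + A - A - A) := by
      intro j k a b ha hb hjk heq
      set d := (k:ℕ) - (j:ℕ) with hd
      have hd1 : 1 ≤ d := by omega
      have hdm : d ≤ m := by
        have := k.isLt
        omega
      have hkd : (k:ℕ) = d + (j:ℕ) := by omega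
      have hdr : (d:R) * r = a - b := by
        rw [hkd, add_nsmul] at heq
        have : a = d • r + b := by
          have h2 : (j:ℕ) • r + a = (j:ℕ) • r + (d • r + b) := by
            rw [heq]; abel
          exact add_left_cancel h2
        rw [this, nsmul_eq_mul]
        abel
      have hu : IsUnit ((d : R)) := hunit d hd1 hdm
      have hmemAB : a - b ∈ A + A - A - A := by
        have hab : a - b = a + a0 - a0 - b := by abel
        rw [hab]
        exact Finset.sub_mem_sub (Finset.sub_mem_sub (Finset.add_mem_add ha ha0) ha0) hb
      have hy : Ring.inverse ((d : R)) ∈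
          (Finset.Icc 1 m).image (fun j : ℕ => Ring.inverse ((j : R))) :=
        Finset.mem_image.mpr ⟨d, Finset.mem_Icc.mpr ⟨hd1, hdm⟩, rfl⟩
      have hr : Ring.inverse ((d : R)) * (a - b) = r := by
        rw [← hdr, ← mul_assoc, Ring.inverse_mul_cancel _ hu, one_mul]
      rw [← hr]
      exact Finset.mul_mem_mul hy hmemAB
    -- pigeonhole
    have hcard : Fintype.card R < Fintype.card (Fin (m+1) × {x // x ∈ A}) := by
      have h1 : Fintype.card (Fin (m+1) × {x // x ∈ A}) = (m+1) * A.card := by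
        simp [Fintype.card_prod]
      rw [h1]
      have hlt : (Fintype.card R : ℝ) < ((m+1) * A.card : ℕ) := by
        have hinv : α⁻¹ < (m:ℝ) + 1 := Nat.lt_floor_add_one α⁻¹
        have hRA : (Fintype.card R : ℝ) = α⁻¹ * A.card := by
          rw [hA]; field_simp
        rw [hRA]
        push_cast
        have hApos' : (0:ℝ) < A.card := by exact_mod_cast hApos
        nlinarith
      exact_mod_cast hlt
    obtain ⟨⟨j, a⟩, ⟨k, b⟩, hne, heq⟩ :=
      Fintype.exists_ne_map_eq_of_card_lt
        (fun p : Fin (m+1) × {x // x ∈ A} => (p.1 : ℕ) • r + (p.2 : R)) hcard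
    rcases lt_trichotomy (j:ℕ) (k:ℕ) with h | h | h
    · exact key j k a b a.2 b.2 h heq
    · exfalso
      apply hne
      have hjk : j = k := Fin.ext h
      have hab : (a : R) = (b : R) := by
        have := heq
        simp only [hjk] at this
        exact add_left_cancel this
      exact Prod.ext hjk (Subtype.ext hab)
    · exact key k j b a b.2 a.2 h heq.symm
end

section
/- Let q be a positive integer and A ⊆ Z_q a set with |A| = αq, α > 0. Suppose that the least prime factor of q is greater than 2α^{-1} + 3. Then there exists a set X ⊆ Z_q with |X| ≤ α^{-1} + 1 such that X·(A−A) = Z_q, i.e., every element of Z_q can be written as x·(a − a') with x ∈ X and a, a' ∈ A. -/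
theorem stmt15 (q : ℕ) (hq : 0 < q) (A : Finset (ZMod q)) (α : ℝ)
    (hA : (A.card : ℝ) = α * q) (hα : 0 < α)
    (hmin : 2 * α⁻¹ + 3 < (q.minFac : ℝ)) :
    ∃ X : Finset (ZMod q), (X.card : ℝ) ≤ α⁻¹ + 1 ∧
      ∀ g : ZMod q, ∃ x ∈ X, ∃ a ∈ A, ∃ a' ∈ A, g = x * (a - a') := by
  haveI : NeZero q := ⟨hq.ne'⟩
  set m : ℕ := ⌊α⁻¹⌋₊ + 1 with hm
  have hαinv : (0:ℝ) < α⁻¹ := by positivity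
  have hmgt : (α⁻¹ : ℝ) < m := by rw [hm]; push_cast; exact Nat.lt_floor_add_one _
  have hmle : (m : ℝ) ≤ α⁻¹ + 1 := by
    have h := Nat.floor_le hαinv.le
    rw [hm]; push_cast; linarith
  have hmlt : (m : ℝ) < q.minFac := by linarith
  have hunit : ∀ j : ℕ, 0 < j → j ≤ m → IsUnit ((j : ℕ) : ZMod q) := by
    intro j hj hjm
    rw [ZMod.isUnit_iff_coprime]
    by_contra hcop
    obtain ⟨p, hp, hpj, hpq⟩ := Nat.Prime.not_coprime_iff_dvd.mp hcop
    have h1 : p ≤ j := Nat.le_of_dvd hj hpj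
    have h2 : q.minFac ≤ p := Nat.minFac_le_of_dvd hp.two_le hpq
    have h3 : q.minFac ≤ m := le_trans h2 (le_trans h1 hjm)
    have : (q.minFac : ℝ) ≤ (m : ℝ) := by exact_mod_cast h3
    linarith
  refine ⟨(Finset.Icc 1 (m-1)).image (fun j : ℕ => ((j : ZMod q))⁻¹), ?_, ?_⟩
  · calc ((Finset.image (fun j : ℕ => ((j : ZMod q))⁻¹) (Finset.Icc 1 (m-1))).card : ℝ)
        ≤ ((Finset.Icc 1 (m-1)).card : ℝ) := by
          exact_mod_cast Finset.card_image_le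
      _ ≤ (m : ℝ) := by
          have : (Finset.Icc 1 (m-1)).card ≤ m := by
            rw [Nat.card_Icc]; omega
          exact_mod_cast this
      _ ≤ α⁻¹ + 1 := hmle
  · intro g
    by_contra hcon
    push_neg at hcon
    -- key: no collision between translates
    have key : ∀ c' c : ℕ, c' ∈ Finset.Icc 1 m → c ∈ Finset.Icc 1 m → c' < c →
        ∀ a ∈ A, ∀ a' ∈ A, a + (c : ZMod q) * g ≠ a' + (c' : ZMod q) * g := by
      intro c' c hc' hc hlt a ha a' ha' heq
      simp only [Finset.mem_Icc] at hc hc'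
      set d : ℕ := c - c' with hd
      have hd1 : 0 < d := by omega
      have hdm : d ≤ m - 1 := by omega
      have hdu : IsUnit ((d : ℕ) : ZMod q) := hunit d hd1 (by omega)
      have hcast : (c : ZMod q) = (c' : ZMod q) + (d : ZMod q) := by
        rw [hd]
        have h : c' + (c - c') = c := by omega
        conv_lhs => rw [← h]
        push_cast; ring
      have heq2 : (d : ZMod q) * g = a' - a := by
        rw [hcast] at heq
        have : a + ((c' : ZMod q) * g + (d : ZMod q) * g) = a' + (c' : ZMod q) * g := by
          rw [← heq]; ring
        linear_combination this
      have hg : g = ((d : ZMod q))⁻¹ * (a' - a) := by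
        rw [← heq2, ← mul_assoc, ZMod.inv_mul_of_unit _ hdu, one_mul]
      exact hcon ((d : ZMod q))⁻¹
        (Finset.mem_image.mpr ⟨d, Finset.mem_Icc.mpr ⟨hd1, hdm⟩, rfl⟩)
        a' ha' a ha hg
    -- translates are pairwise disjoint
    have hdisj : ((Finset.Icc 1 m : Finset ℕ) : Set ℕ).PairwiseDisjoint
        (fun c : ℕ => A.image (fun a => a + (c : ZMod q) * g)) := by
      intro c hc c' hc' hne
      simp only [Function.onFun]
      simp only [Finset.coe_Icc, Set.mem_Icc] at hc hc'
      rw [Finset.disjoint_left]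
      intro z hz hz'
      simp only [Finset.mem_image] at hz hz'
      obtain ⟨a, ha, rfl⟩ := hz
      obtain ⟨a', ha', heq⟩ := hz'
      rcases lt_or_gt_of_ne hne with h | h
      · exact key c c' (Finset.mem_Icc.mpr hc) (Finset.mem_Icc.mpr hc') h a' ha' a ha heq
      · exact key c' c (Finset.mem_Icc.mpr hc') (Finset.mem_Icc.mpr hc) h a ha a' ha' heq.symm
    have hcard : ((Finset.Icc 1 m).biUnion
        (fun c : ℕ => A.image (fun a => a + (c : ZMod q) * g))).card = m * A.card := by
      rw [Finset.card_biUnion hdisj]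
      have : ∀ c ∈ Finset.Icc 1 m,
          (A.image (fun a => a + (c : ZMod q) * g)).card = A.card := by
        intro c _
        exact Finset.card_image_of_injective _ (add_left_injective _)
      rw [Finset.sum_congr rfl this, Finset.sum_const, Nat.card_Icc]
      simp [Nat.mul_comm]
    have hle : m * A.card ≤ q := by
      calc m * A.card = _ := hcard.symm
        _ ≤ Fintype.card (ZMod q) := Finset.card_le_univ _
        _ = q := ZMod.card q
    have hle' : (m : ℝ) * (A.card : ℝ) ≤ q := by exact_mod_cast hle
    rw [hA] at hle'
    have hqpos : (0:ℝ) < q := by exact_mod_cast hq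
    have : (1:ℝ) < m * α := by
      have := (div_lt_iff₀ hα).mp (by rwa [inv_eq_one_div] at hmgt)
      nlinarith
    nlinarith
end

section
/- Let q be a positive integer and A ⊆ Z_q a set with |A| = αq, α > 0. Suppose that the least prime factor of q is greater than 2α^{-1} + 3. Then there exists a positive integer k* with k* ≤ α^{-1} + 1 such that for every g ∈ Z_q there exist an integer j with 1 ≤ j ≤ k* and elements a, a' ∈ A satisfying j·g = a − a' in Z_q (note that each such j is invertible modulo q, so g lies in j^{-1}·(A−A)). -/
theorem stmt16 (q : ℕ) (hq : 0 < q) (A : Finset (ZMod q)) (α : ℝ)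
    (hA : (A.card : ℝ) = α * q) (hα : 0 < α)
    (hmin : 2 * α⁻¹ + 3 < (q.minFac : ℝ)) :
    ∃ kstar : ℕ, 0 < kstar ∧ (kstar : ℝ) ≤ α⁻¹ + 1 ∧
      ∀ g : ZMod q, ∃ j : ℕ, 1 ≤ j ∧ j ≤ kstar ∧
        ∃ a ∈ A, ∃ a' ∈ A, (j : ZMod q) * g = a - a' := by
  haveI : NeZero q := ⟨hq.ne'⟩
  set k : ℕ := ⌊α⁻¹⌋₊ + 1 with hk
  refine ⟨k, Nat.succ_pos _, ?_, ?_⟩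
  · have := Nat.floor_le (le_of_lt (inv_pos.mpr hα))
    rw [hk]
    push_cast
    linarith
  intro g
  -- pigeonhole: (k+1) * |A| > q
  have hcard : (Finset.univ : Finset (ZMod q)).card
      < ((Finset.range (k + 1)) ×ˢ A).card := by
    rw [Finset.card_product, Finset.card_range, Finset.card_univ, ZMod.card]
    have h1 : (α⁻¹ : ℝ) < k + 1 := by
      have := Nat.lt_floor_add_one (α⁻¹)
      rw [hk]
      push_cast
      linarith
    have h2 : (q : ℝ) < (k + 1) * A.card := by
      rw [hA]
      have hq' : (0 : ℝ) < q := by exact_mod_cast hq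
      have hinv : α⁻¹ * α = 1 := inv_mul_cancel₀ hα.ne'
      nlinarith [mul_lt_mul_of_pos_right h1 hα]
    exact_mod_cast h2
  obtain ⟨⟨j₁, a₁⟩, hm₁, ⟨j₂, a₂⟩, hm₂, hne, heq⟩ :=
    Finset.exists_ne_map_eq_of_card_lt_of_maps_to hcard
      (f := fun p : ℕ × ZMod q => p.2 + (p.1 : ZMod q) * g)
      (fun _ _ => Finset.mem_univ _)
  simp only [Finset.mem_product, Finset.mem_range] at hm₁ hm₂
  simp only at heq
  -- wlog j₂ < j₁
  rcases lt_trichotomy j₁ j₂ with h | h | h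
  · refine ⟨j₂ - j₁, by omega, by omega, a₁, hm₁.2, a₂, hm₂.2, ?_⟩
    have : ((j₂ - j₁ : ℕ) : ZMod q) = (j₂ : ZMod q) - j₁ := by
      push_cast [Nat.cast_sub h.le]; ring
    rw [this, sub_mul]
    linear_combination -heq
  · exfalso
    apply hne
    have : a₁ = a₂ := by
      subst h
      simpa using heq
    simp [h, this]
  · refine ⟨j₁ - j₂, by omega, by omega, a₂, hm₂.2, a₁, hm₁.2, ?_⟩
    have : ((j₁ - j₂ : ℕ) : ZMod q) = (j₁ : ZMod q) - j₂ := by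
      push_cast [Nat.cast_sub h.le]; ring
    rw [this, sub_mul]
    linear_combination heq
end

section
/- Let q and k be positive integers and let A_1, …, A_k ⊆ Z_q be sets with |A_i| = α_i·q and α_i > 0 for each i. Suppose that the least prime factor of q is greater than 2·(α_1⋯α_k)^{-1} + 3. Then there exists a set X ⊆ Z_q with |X| ≤ (α_1⋯α_k)^{-1} + 1 such that X·(⋂_{i=1}^k (A_i − A_i)) = Z_q, i.e., every element g ∈ Z_q can be written as g = x·d with x ∈ X and d ∈ ⋂_{i=1}^k (A_i − A_i). -/
theorem stmt17 (q k : ℕ) (hq : 0 < q) (hk : 0 < k)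
    (A : Fin k → Finset (ZMod q)) (α : Fin k → ℝ)
    (hA : ∀ i, ((A i).card : ℝ) = α i * q) (hα : ∀ i, 0 < α i)
    (hmin : 2 * (∏ i, α i)⁻¹ + 3 < (q.minFac : ℝ)) :
    ∃ X : Finset (ZMod q), (X.card : ℝ) ≤ (∏ i, α i)⁻¹ + 1 ∧
      ∀ g : ZMod q, ∃ x ∈ X, ∃ d : ZMod q,
        (∀ i, ∃ a ∈ A i, ∃ a' ∈ A i, d = a - a') ∧ g = x * d := by
  haveI : NeZero q := ⟨hq.ne'⟩
  set αP : ℝ := ∏ i, α i with hαP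
  have hαPpos : 0 < αP := Finset.prod_pos (fun i _ => hα i)
  set N : ℕ := ⌊αP⁻¹⌋₊ with hN
  have hinvpos : (0:ℝ) < αP⁻¹ := inv_pos.mpr hαPpos
  have hNle : (N : ℝ) ≤ αP⁻¹ := Nat.floor_le hinvpos.le
  have hNltmin : (N : ℝ) < q.minFac := by
    have : αP⁻¹ ≤ 2 * αP⁻¹ + 3 := by linarith
    linarith
  have hNltmin' : N < q.minFac := by exact_mod_cast hNltmin
  -- coprimality of any 1 ≤ m ≤ N with q
  have hcop : ∀ m : ℕ, 1 ≤ m → m ≤ N → Nat.Coprime m q := by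
    intro m hm1 hmN
    by_contra hne
    have hg1 : Nat.gcd m q ≠ 1 := hne
    have hp : (Nat.gcd m q).minFac.Prime := Nat.minFac_prime hg1
    have hpm : (Nat.gcd m q).minFac ∣ m :=
      ((Nat.gcd m q).minFac_dvd).trans (Nat.gcd_dvd_left m q)
    have hpq : (Nat.gcd m q).minFac ∣ q :=
      ((Nat.gcd m q).minFac_dvd).trans (Nat.gcd_dvd_right m q)
    have h1 : q.minFac ≤ (Nat.gcd m q).minFac := Nat.minFac_le_of_dvd hp.two_le hpq
    have h2 : (Nat.gcd m q).minFac ≤ m := Nat.le_of_dvd hm1 hpm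
    omega
  -- key claim
  have key : ∀ g : ZMod q, ∃ m : ℕ, 1 ≤ m ∧ m ≤ N ∧
      ∀ i, ∃ a ∈ A i, ∃ a' ∈ A i, (m : ZMod q) * g = a - a' := by
    intro g
    have hcardZ : Fintype.card (ZMod q) = q := ZMod.card q
    have hqk : Fintype.card (Fin k → ZMod q) = q ^ k := by
      simp [hcardZ]
    set B : Finset (Fin k → ZMod q) := Fintype.piFinset A with hB
    have hBcard : (B.card : ℝ) = αP * q ^ k := by
      rw [hB, Fintype.card_piFinset]
      push_cast
      rw [Finset.prod_congr rfl (fun i _ => hA i), hαP, Finset.prod_mul_distrib]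
      simp [mul_comm]
    have hlt : Fintype.card (Fin k → ZMod q) < ((Finset.range (N+1)) ×ˢ B).card := by
      rw [Finset.card_product, Finset.card_range, hqk]
      have hr : (q:ℝ)^k < ((N+1) * B.card : ℕ) := by
        push_cast
        rw [hBcard]
        have h1 : αP⁻¹ < (N:ℝ) + 1 := Nat.lt_floor_add_one _
        have hqk0 : (0:ℝ) < (q:ℝ)^k := by positivity
        calc (q:ℝ)^k = αP⁻¹ * (αP * (q:ℝ)^k) := by field_simp
          _ < ((N:ℝ)+1) * (αP * (q:ℝ)^k) := by
              apply mul_lt_mul_of_pos_right h1; positivity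
      exact_mod_cast hr
    obtain ⟨⟨j, b⟩, hmem, ⟨j', b'⟩, hmem', hne, heq⟩ :=
      Finset.exists_ne_map_eq_of_card_lt_of_maps_to hlt
        (f := fun p : ℕ × (Fin k → ZMod q) => fun i => p.2 i + (p.1 : ZMod q) * g)
        (fun _ _ => Finset.mem_univ _)
    simp only [Finset.mem_product, Finset.mem_range] at hmem hmem'
    have heq' : ∀ i, b i + (j : ZMod q) * g = b' i + (j' : ZMod q) * g :=
      fun i => congrFun heq i
    have hjj' : j ≠ j' := by
      intro h
      apply hne
      subst h
      have : b = b' := funext fun i => by have := heq' i; simpa using this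
      simp [this]
    -- wlog j < j'
    rcases lt_or_gt_of_ne hjj' with hlt' | hlt'
    · refine ⟨j' - j, by omega, by omega, fun i => ?_⟩
      refine ⟨b i, ?_, b' i, ?_, ?_⟩
      · exact Fintype.mem_piFinset.mp hmem.2 i
      · exact Fintype.mem_piFinset.mp hmem'.2 i
      · have := heq' i
        have hcast : ((j' - j : ℕ) : ZMod q) = (j' : ZMod q) - (j : ZMod q) := by
          push_cast [Nat.cast_sub hlt'.le]; ring
        rw [hcast]
        linear_combination -this
    · refine ⟨j - j', by omega, by omega, fun i => ?_⟩
      refine ⟨b' i, ?_, b i, ?_, ?_⟩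
      · exact Fintype.mem_piFinset.mp hmem'.2 i
      · exact Fintype.mem_piFinset.mp hmem.2 i
      · have := heq' i
        have hcast : ((j - j' : ℕ) : ZMod q) = (j : ZMod q) - (j' : ZMod q) := by
          push_cast [Nat.cast_sub hlt'.le]; ring
        rw [hcast]
        linear_combination this
  refine ⟨(Finset.Icc 1 N).image (fun m : ℕ => ((m : ZMod q))⁻¹), ?_, ?_⟩
  · calc ((((Finset.Icc 1 N).image fun m : ℕ => ((m : ZMod q))⁻¹).card : ℝ))
        ≤ ((Finset.Icc 1 N).card : ℝ) := by exact_mod_cast Finset.card_image_le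
      _ = N := by rw [Nat.card_Icc]; simp
      _ ≤ αP⁻¹ + 1 := by linarith
  · intro g
    obtain ⟨m, hm1, hmN, hmd⟩ := key g
    refine ⟨((m : ZMod q))⁻¹, Finset.mem_image_of_mem _ (Finset.mem_Icc.mpr ⟨hm1, hmN⟩),
      (m : ZMod q) * g, fun i => by
        obtain ⟨a, ha, a', ha', h⟩ := hmd i
        exact ⟨a, ha, a', ha', h⟩, ?_⟩
    have hu : (m : ZMod q) * ((m : ZMod q))⁻¹ = 1 := ZMod.coe_mul_inv_eq_one m (hcop m hm1 hmN)
    calc g = ((m : ZMod q) * ((m : ZMod q))⁻¹) * g := by rw [hu]; ring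
      _ = ((m : ZMod q))⁻¹ * ((m : ZMod q) * g) := by ring
end

section
/- Let q be a positive integer and let A, B ⊆ Z_q be sets with |A| = αq and |B| = βq, where α ≥ β > 0. Suppose that the least prime factor of q is greater than 2β^{-1} + 3. Then there exists a positive integer d with d ≤ α^{-(β^{-1} + 1)} such that d·Z_q ⊆ (A−A)(B−B), i.e., for every x ∈ Z_q there exist a, a' ∈ A and b, b' ∈ B with d·x = (a−a')(b−b') in Z_q (here d need not divide q). -/
theorem stmt18 (q : ℕ) (hq : 0 < q) (A B : Finset (ZMod q)) (α β : ℝ)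
    (hA : (A.card : ℝ) = α * q) (hB : (B.card : ℝ) = β * q)
    (hαβ : β ≤ α) (hβ : 0 < β)
    (hmin : 2 * β⁻¹ + 3 < (q.minFac : ℝ)) :
    ∃ d : ℕ, 0 < d ∧ (d : ℝ) ≤ α ^ (-(β⁻¹ + 1)) ∧
      ∀ x : ZMod q, ∃ a ∈ A, ∃ a' ∈ A, ∃ b ∈ B, ∃ b' ∈ B,
        (d : ZMod q) * x = (a - a') * (b - b') := by
  haveI : NeZero q := ⟨hq.ne'⟩
  have hqR : (0:ℝ) < q := by exact_mod_cast hq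
  have hα : 0 < α := lt_of_lt_of_le hβ hαβ
  have hβinv : (0:ℝ) < β⁻¹ := inv_pos.mpr hβ
  have hβ1 : β ≤ 1 := by
    have h1 : B.card ≤ Fintype.card (ZMod q) := Finset.card_le_univ B
    rw [ZMod.card] at h1
    have h2 : (B.card : ℝ) ≤ q := by exact_mod_cast h1
    rw [hB] at h2; nlinarith
  have hα1 : α ≤ 1 := by
    have h1 : A.card ≤ Fintype.card (ZMod q) := Finset.card_le_univ A
    rw [ZMod.card] at h1
    have h2 : (A.card : ℝ) ≤ q := by exact_mod_cast h1
    rw [hA] at h2; nlinarith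
  set K : ℕ := ⌊β⁻¹⌋₊ with hKdef
  have hK1 : 1 ≤ K := Nat.le_floor (by
    rw [Nat.cast_one]
    have := mul_inv_cancel₀ hβ.ne'
    nlinarith)
  have hKβ : (K : ℝ) ≤ β⁻¹ := Nat.floor_le hβinv.le
  have hβK : β⁻¹ < (K : ℝ) + 1 := Nat.lt_floor_add_one _
  have hKmin : K < q.minFac := by
    have : (K : ℝ) < (q.minFac : ℝ) := by linarith
    exact_mod_cast this
  -- coprimality of small k with q
  have hcop : ∀ k : ℕ, 0 < k → k ≤ K → Nat.Coprime k q := by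
    intro k hk0 hkK
    by_contra h
    have hg2 : 2 ≤ Nat.gcd k q := by
      have h0 : 0 < Nat.gcd k q := Nat.gcd_pos_of_pos_left q hk0
      rcases Nat.lt_or_ge (Nat.gcd k q) 2 with h2 | h2
      · exact absurd (Nat.coprime_iff_gcd_eq_one.mpr (by omega)) h
      · exact h2
    have hmle : q.minFac ≤ Nat.gcd k q :=
      Nat.minFac_le_of_dvd hg2 (Nat.gcd_dvd_right k q)
    have hgk : Nat.gcd k q ≤ k := Nat.le_of_dvd hk0 (Nat.gcd_dvd_left k q)
    omega
  -- B pigeonhole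
  have hBpig : ∀ x : ZMod q, ∃ k : ℕ, 1 ≤ k ∧ k ≤ K ∧
      ∃ b ∈ B, ∃ b' ∈ B, (k : ZMod q) * x = b - b' := by
    intro x
    have hcard : (Finset.univ : Finset (ZMod q)).card <
        (B ×ˢ (Finset.univ : Finset (Fin (K+1)))).card := by
      rw [Finset.card_product, Finset.card_univ, Finset.card_univ, ZMod.card,
        Fintype.card_fin]
      have hr : (q : ℝ) < (B.card : ℝ) * ((K:ℝ) + 1) := by
        rw [hB]
        have : β⁻¹ * (β * q) < ((K:ℝ)+1) * (β * q) := by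
          apply mul_lt_mul_of_pos_right hβK (by positivity)
        have h3 : β⁻¹ * (β * q) = q := by field_simp
        nlinarith
      have : (q : ℝ) < ((B.card * (K+1) : ℕ) : ℝ) := by push_cast; linarith
      exact_mod_cast this
    obtain ⟨⟨b, i⟩, hmem, ⟨b', j⟩, hmem', hne, heq⟩ :=
      Finset.exists_ne_map_eq_of_card_lt_of_maps_to hcard
        (f := fun p : ZMod q × Fin (K+1) => p.1 + (p.2.val : ZMod q) * x)
        (fun p _ => Finset.mem_univ _)
    simp only [Finset.mem_product, Finset.mem_univ, and_true] at hmem hmem'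
    simp only at heq
    rcases lt_trichotomy i.val j.val with h | h | h
    · refine ⟨j.val - i.val, by omega, by have := j.isLt; omega, b, hmem, b', hmem', ?_⟩
      rw [Nat.cast_sub h.le]
      linear_combination -heq
    · exfalso
      apply hne
      have : b = b' := by
        have h2 : (i.val : ZMod q) = (j.val : ZMod q) := by rw [h]
        rw [h2] at heq
        exact add_right_cancel heq
      rw [this, Fin.ext h]
    · refine ⟨i.val - j.val, by omega, by have := i.isLt; omega, b', hmem', b, hmem, ?_⟩
      rw [Nat.cast_sub h.le]
      linear_combination heq
  -- inverses
  set v : Fin K → ZMod q := fun k => (((k : ℕ) + 1 : ℕ) : ZMod q)⁻¹ with hv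
  -- A pigeonhole
  have main : ∃ d : ℕ, 0 < d ∧ d ≤ ⌊α⁻¹ ^ K⌋₊ ∧
      ∀ k : Fin K, ∃ a ∈ A, ∃ a' ∈ A, (d : ZMod q) * v k = a - a' := by
    have hcard2 : (Finset.univ : Finset (Fin K → ZMod q)).card <
        ((Finset.univ : Finset (Fin (⌊α⁻¹ ^ K⌋₊ + 1))) ×ˢ
          Fintype.piFinset (fun _ : Fin K => A)).card := by
      rw [Finset.card_product, Finset.card_univ, Finset.card_univ, Fintype.card_fin,
        Fintype.card_piFinset, Finset.prod_const, Finset.card_univ, Fintype.card_fin,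
        Fintype.card_fun, ZMod.card, Fintype.card_fin]
      have hr : ((q:ℝ))^K < ((⌊α⁻¹ ^ K⌋₊ + 1 : ℕ):ℝ) * ((A.card:ℝ))^K := by
        have hN : α⁻¹ ^ K < ((⌊α⁻¹ ^ K⌋₊ + 1 : ℕ) : ℝ) := by
          push_cast; exact Nat.lt_floor_add_one _
        rw [hA, mul_pow]
        have h1 : (q:ℝ)^K = α⁻¹ ^ K * (α ^ K * (q:ℝ)^K) := by
          rw [← mul_assoc, ← mul_pow, inv_mul_cancel₀ hα.ne', one_pow, one_mul]
        calc (q:ℝ)^K = α⁻¹ ^ K * (α ^ K * (q:ℝ)^K) := h1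
          _ < ((⌊α⁻¹ ^ K⌋₊ + 1 : ℕ) : ℝ) * (α ^ K * (q:ℝ)^K) :=
              mul_lt_mul_of_pos_right hN (mul_pos (pow_pos hα K) (pow_pos hqR K))
      have : ((q^K : ℕ) : ℝ) < (((⌊α⁻¹ ^ K⌋₊ + 1) * A.card^K : ℕ) : ℝ) := by push_cast; push_cast at hr; linarith
      exact_mod_cast this
    obtain ⟨⟨t, a⟩, hm, ⟨t', a'⟩, hm', hne, heq⟩ :=
      Finset.exists_ne_map_eq_of_card_lt_of_maps_to hcard2
        (f := fun p : Fin (⌊α⁻¹ ^ K⌋₊ + 1) × (Fin K → ZMod q) =>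
          fun k => p.2 k + (p.1.val : ZMod q) * v k)
        (fun p _ => Finset.mem_univ _)
    simp only [Finset.mem_product, Finset.mem_univ, true_and, Fintype.mem_piFinset] at hm hm'
    have heq' : ∀ k : Fin K, a k + (t.val : ZMod q) * v k = a' k + (t'.val : ZMod q) * v k := by
      intro k
      exact congrFun heq k
    rcases lt_trichotomy t.val t'.val with h | h | h
    · refine ⟨t'.val - t.val, by omega, by have := t'.isLt; omega, fun k => ?_⟩
      refine ⟨a k, hm k, a' k, hm' k, ?_⟩
      rw [Nat.cast_sub h.le]
      linear_combination -(heq' k)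
    · exfalso
      apply hne
      have hte : t = t' := Fin.ext h
      have : a = a' := by
        funext k
        have h2 := heq' k
        rw [hte] at h2
        exact add_right_cancel h2
      rw [this, hte]
    · refine ⟨t.val - t'.val, by omega, by have := t.isLt; omega, fun k => ?_⟩
      refine ⟨a' k, hm' k, a k, hm k, ?_⟩
      rw [Nat.cast_sub h.le]
      linear_combination heq' k
  obtain ⟨d, hd0, hdle, hApig⟩ := main
  refine ⟨d, hd0, ?_, ?_⟩
  · have h1 : (d : ℝ) ≤ α⁻¹ ^ K := le_trans (by exact_mod_cast hdle) (Nat.floor_le (by positivity))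
    have h2 : α⁻¹ ^ K = α ^ (-(K:ℝ)) := by
      rw [inv_pow, ← Real.rpow_natCast α K, ← Real.rpow_neg hα.le]
    have h3 : α ^ (-(K:ℝ)) ≤ α ^ (-(β⁻¹ + 1)) :=
      Real.rpow_le_rpow_of_exponent_ge hα hα1 (by linarith)
    calc (d:ℝ) ≤ α⁻¹ ^ K := h1
      _ = α ^ (-(K:ℝ)) := h2
      _ ≤ α ^ (-(β⁻¹ + 1)) := h3
  · intro x
    obtain ⟨k, hk1, hkK, b, hb, b', hb', hbx⟩ := hBpig x
    obtain ⟨a, ha, a', ha', hax⟩ := hApig ⟨k - 1, by omega⟩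
    refine ⟨a, ha, a', ha', b, hb, b', hb', ?_⟩
    have hk' : k - 1 + 1 = k := by omega
    have hvk : v ⟨k - 1, by omega⟩ = ((k : ℕ) : ZMod q)⁻¹ := by
      rw [hv]
      show (((k - 1) + 1 : ℕ) : ZMod q)⁻¹ = _
      rw [hk']
    rw [hvk] at hax
    have hkinv : ((k:ℕ):ZMod q) * ((k:ℕ):ZMod q)⁻¹ = 1 :=
      ZMod.coe_mul_inv_eq_one k (hcop k hk1 hkK)
    calc (d : ZMod q) * x
        = ((d : ZMod q) * ((k:ℕ):ZMod q)⁻¹) * (((k:ℕ):ZMod q) * x) := by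
          linear_combination (-(d:ZMod q) * x) * hkinv
      _ = (a - a') * (b - b') := by rw [hbx, hax]
end
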